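/- For all vertex-disjoint finite simple graphs G₁ and G₂ and vertices v ∈ V(G₁), w ∈ V(G₂), it holds that tw(G₁ ⊕_{v,w} G₂) = max(tw(G₁), tw(G₂)) and max(pw(G₁), pw(G₂)) ≤ pw(G₁ ⊕_{v,w} G₂) ≤ max(pw(G₁), pw(G₂)) + 1, where G₁ ⊕_{v,w} G₂ is the 1-sum of G₁ and G₂ at v and w. -/

import Mathlib

open SimpleGraph

/-- `(T, X)` is a tree-decomposition of the graph `G`. -/
def IsTreeDecomp {V ι : Type} (G : SimpleGraph V) (T : SimpleGraph ι)
    (X : ι → Finset V) : Prop :=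
  T.IsTree ∧
  (∀ v : V, ∃ u : ι, v ∈ X u) ∧
  (∀ v w : V, G.Adj v w → ∃ u : ι, v ∈ X u ∧ w ∈ X u) ∧
  (∀ v : V, (T.induce {u : ι | v ∈ X u}).Connected)

/-- The tree-width of `G`: the minimum over all tree-decompositions of
(maximum bag size − 1). -/
noncomputable def treewidth {V : Type} (G : SimpleGraph V) : ℕ :=
  sInf { k | ∃ (ι : Type) (T : SimpleGraph ι) (X : ι → Finset V),
    IsTreeDecomp G T X ∧ sSup (Set.range fun u => (X u).card) - 1 = k }

/-- `X` is a path-decomposition of the graph `G`. -/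
def IsPathDecomp {V : Type} {r : ℕ} (G : SimpleGraph V) (X : Fin r → Finset V) : Prop :=
  (∀ v : V, ∃ i, v ∈ X i) ∧
  (∀ v w : V, G.Adj v w → ∃ i, v ∈ X i ∧ w ∈ X i) ∧
  (∀ i j l : Fin r, i < j → j < l → ∀ x, x ∈ X i → x ∈ X l → x ∈ X j)

/-- The path-width of `G`: the minimum over all path-decompositions of
(maximum bag size − 1). -/
noncomputable def pathwidth {V : Type} (G : SimpleGraph V) : ℕ :=
  sInf { k | ∃ (r : ℕ) (X : Fin r → Finset V),
    IsPathDecomp G X ∧ sSup (Set.range fun i => (X i).card) - 1 = k }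

/-- `oneSum G₁ G₂ v w` is the 1-sum `G₁ ⊕_{v,w} G₂`: the disjoint union of `G₁` and `G₂`
with `v` and `w` identified to a single new vertex (modelled as `none`) adjacent to all
vertices of `N_{G₁}(v) ∪ N_{G₂}(w)`. -/
def oneSum {V₁ V₂ : Type} (G₁ : SimpleGraph V₁) (G₂ : SimpleGraph V₂) (v : V₁) (w : V₂) :
    SimpleGraph (Option ({x : V₁ // x ≠ v} ⊕ {y : V₂ // y ≠ w})) where
  Adj x y :=
    match x, y with
    | some (.inl a), some (.inl b) => G₁.Adj a.1 b.1
    | some (.inr a), some (.inr b) => G₂.Adj a.1 b.1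
    | some (.inl a), none => G₁.Adj a.1 v
    | none, some (.inl b) => G₁.Adj b.1 v
    | some (.inr a), none => G₂.Adj a.1 w
    | none, some (.inr b) => G₂.Adj b.1 w
    | _, _ => False
  symm := by
    constructor
    rintro (_ | a | a) (_ | b | b) h <;> simp_all [SimpleGraph.adj_comm]
  loopless := by
    constructor
    rintro (_ | a | a) h <;> simp_all


section Glue
variable {ι₁ ι₂ : Type} (T₁ : SimpleGraph ι₁) (T₂ : SimpleGraph ι₂) (u₀ : ι₁) (u₁ : ι₂)

def glue : SimpleGraph (ι₁ ⊕ ι₂) where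
  Adj x y := match x, y with
    | .inl a, .inl b => T₁.Adj a b
    | .inr a, .inr b => T₂.Adj a b
    | .inl a, .inr b => a = u₀ ∧ b = u₁
    | .inr a, .inl b => a = u₁ ∧ b = u₀
  symm := by constructor; rintro (a|a) (b|b) h <;> simp_all [SimpleGraph.adj_comm] <;> tauto
  loopless := by constructor; rintro (a|a) h <;> simp_all

variable {T₁ T₂ u₀ u₁}

def glueHomL : T₁ →g glue T₁ T₂ u₀ u₁ := ⟨Sum.inl, fun h => h⟩
def glueHomR : T₂ →g glue T₁ T₂ u₀ u₁ := ⟨Sum.inr, fun h => h⟩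

lemma glue_cross : (glue T₁ T₂ u₀ u₁).Adj (.inl u₀) (.inr u₁) := ⟨rfl, rfl⟩

lemma glue_connected (h₁ : T₁.Connected) (h₂ : T₂.Connected) :
    (glue T₁ T₂ u₀ u₁).Connected := by
  rw [connected_iff]
  refine ⟨?_, ⟨.inl u₀⟩⟩
  have H : ∀ z, (glue T₁ T₂ u₀ u₁).Reachable z (.inl u₀) := by
    rintro (a|a)
    · exact Reachable.map glueHomL (h₁.preconnected a u₀)
    · exact (Reachable.map glueHomR (h₂.preconnected a u₁)).trans glue_cross.symm.reachable
  exact fun x y => (H x).trans (H y).symm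

/-- Any walk avoiding the cross edge keeps the side invariant. -/
lemma glue_side {x y : ι₁ ⊕ ι₂} (p : (glue T₁ T₂ u₀ u₁).Walk x y)
    (he : s(Sum.inl u₀, Sum.inr u₁) ∉ p.edges) : x.isLeft = y.isLeft := by
  induction p with
  | nil => rfl
  | @cons x m y h q ih =>
    rw [Walk.edges_cons, List.mem_cons] at he
    push_neg at he
    refine Eq.trans ?_ (ih he.2)
    rcases x with a|a <;> rcases m with b|b
    · rfl
    · obtain ⟨rfl, rfl⟩ := h; exact absurd rfl he.1
    · obtain ⟨rfl, rfl⟩ := h; exact absurd (Sym2.eq_swap) he.1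
    · rfl

def projL : ι₁ ⊕ ι₂ → ι₁ := Sum.elim id (fun _ => u₀)
def projR : ι₁ ⊕ ι₂ → ι₂ := Sum.elim (fun _ => u₁) id

lemma glue_projL {x y : ι₁ ⊕ ι₂} (p : (glue T₁ T₂ u₀ u₁).Walk x y) :
    ∃ q : T₁.Walk (projL (u₀ := u₀) x) (projL (u₀ := u₀) y),
      ∀ a b : ι₁, s(a, b) ∈ q.edges → s(Sum.inl a, Sum.inl b) ∈ p.edges := by
  induction p with
  | nil => exact ⟨.nil, by simp⟩
  | @cons x m y h q ih =>
    obtain ⟨q', hq'⟩ := ih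
    rcases x with a|a <;> rcases m with b|b
    · refine ⟨.cons (show T₁.Adj a b from h) q', ?_⟩
      intro c d hm
      erw [Walk.edges_cons, List.mem_cons] at hm ⊢
      rcases hm with hm | hm
      · left
        rw [Sym2.eq_iff] at hm ⊢
        rcases hm with ⟨rfl, rfl⟩ | ⟨rfl, rfl⟩
        · exact Or.inl ⟨rfl, rfl⟩
        · exact Or.inr ⟨rfl, rfl⟩
      · exact Or.inr (hq' c d hm)
    · obtain ⟨rfl, rfl⟩ := h
      refine ⟨q'.copy rfl rfl, ?_⟩
      intro c d hm
      erw [Walk.edges_copy] at hm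
      exact List.mem_cons_of_mem _ (hq' c d hm)
    · obtain ⟨rfl, rfl⟩ := h
      refine ⟨q'.copy rfl rfl, ?_⟩
      intro c d hm
      erw [Walk.edges_copy] at hm
      exact List.mem_cons_of_mem _ (hq' c d hm)
    · refine ⟨q'.copy rfl rfl, ?_⟩
      intro c d hm
      erw [Walk.edges_copy] at hm
      exact List.mem_cons_of_mem _ (hq' c d hm)

lemma glue_projR {x y : ι₁ ⊕ ι₂} (p : (glue T₁ T₂ u₀ u₁).Walk x y) :
    ∃ q : T₂.Walk (projR (u₁ := u₁) x) (projR (u₁ := u₁) y),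
      ∀ a b : ι₂, s(a, b) ∈ q.edges → s(Sum.inr a, Sum.inr b) ∈ p.edges := by
  induction p with
  | nil => exact ⟨.nil, by simp⟩
  | @cons x m y h q ih =>
    obtain ⟨q', hq'⟩ := ih
    rcases x with a|a <;> rcases m with b|b
    · refine ⟨q'.copy rfl rfl, ?_⟩
      intro c d hm
      erw [Walk.edges_copy] at hm
      exact List.mem_cons_of_mem _ (hq' c d hm)
    · obtain ⟨rfl, rfl⟩ := h
      refine ⟨q'.copy rfl rfl, ?_⟩
      intro c d hm
      erw [Walk.edges_copy] at hm
      exact List.mem_cons_of_mem _ (hq' c d hm)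
    · obtain ⟨rfl, rfl⟩ := h
      refine ⟨q'.copy rfl rfl, ?_⟩
      intro c d hm
      erw [Walk.edges_copy] at hm
      exact List.mem_cons_of_mem _ (hq' c d hm)
    · refine ⟨.cons (show T₂.Adj a b from h) q', ?_⟩
      intro c d hm
      erw [Walk.edges_cons, List.mem_cons] at hm ⊢
      rcases hm with hm | hm
      · left
        rw [Sym2.eq_iff] at hm ⊢
        rcases hm with ⟨rfl, rfl⟩ | ⟨rfl, rfl⟩
        · exact Or.inl ⟨rfl, rfl⟩
        · exact Or.inr ⟨rfl, rfl⟩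
      · exact Or.inr (hq' c d hm)

lemma glue_isAcyclic (h₁ : T₁.IsAcyclic) (h₂ : T₂.IsAcyclic) :
    (glue T₁ T₂ u₀ u₁).IsAcyclic := by
  rw [isAcyclic_iff_forall_adj_isBridge]
  rw [isAcyclic_iff_forall_adj_isBridge] at h₁ h₂
  rintro (a|a) (b|b) hadj <;>
    rw [isBridge_iff_adj_and_forall_walk_mem_edges] <;>
    refine fun p => ?_
  · obtain ⟨q, hq⟩ := glue_projL p
    have hb := (isBridge_iff_adj_and_forall_walk_mem_edges.mp (h₁ hadj)) q
    exact hq a b hb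
  · obtain ⟨rfl, rfl⟩ := hadj
    by_contra he
    simpa using glue_side p he
  · obtain ⟨rfl, rfl⟩ := hadj
    by_contra he
    rw [Sym2.eq_swap] at he
    simpa using (glue_side p he).symm
  · obtain ⟨q, hq⟩ := glue_projR p
    have hb := (isBridge_iff_adj_and_forall_walk_mem_edges.mp (h₂ hadj)) q
    exact hq a b hb

lemma glue_isTree (h₁ : T₁.IsTree) (h₂ : T₂.IsTree) : (glue T₁ T₂ u₀ u₁).IsTree :=
  ⟨glue_connected h₁.isConnected h₂.isConnected, glue_isAcyclic h₁.IsAcyclic h₂.IsAcyclic⟩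

end Glue

section Trivial
variable {W : Type} [Fintype W] [Nonempty W] (H : SimpleGraph W)

lemma bot_unit_isTree : (⊥ : SimpleGraph Unit).IsTree := by
  refine ⟨?_, isAcyclic_bot⟩
  rw [connected_iff]
  exact ⟨fun a b => by rw [Subsingleton.elim a b], ⟨()⟩⟩

lemma isTreeDecomp_trivial : IsTreeDecomp H (⊥ : SimpleGraph Unit) (fun _ => Finset.univ) := by
  refine ⟨bot_unit_isTree, fun x => ⟨(), Finset.mem_univ x⟩,
    fun x y _ => ⟨(), Finset.mem_univ x, Finset.mem_univ y⟩, fun x => ?_⟩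
  rw [connected_iff]
  refine ⟨fun a b => by rw [Subsingleton.elim a b], ⟨⟨(), Finset.mem_univ x⟩⟩⟩

lemma treeSet_nonempty : { k | ∃ (ι : Type) (T : SimpleGraph ι) (X : ι → Finset W),
    IsTreeDecomp H T X ∧ sSup (Set.range fun u => (X u).card) - 1 = k }.Nonempty :=
  ⟨_, Unit, ⊥, fun _ => Finset.univ, isTreeDecomp_trivial H, rfl⟩

lemma isPathDecomp_trivial : IsPathDecomp H (fun _ : Fin 1 => Finset.univ) := by
  refine ⟨fun x => ⟨0, Finset.mem_univ x⟩,
    fun x y _ => ⟨0, Finset.mem_univ x, Finset.mem_univ y⟩, fun i j l hij hjl => ?_⟩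
  omega

lemma pathSet_nonempty : { k | ∃ (r : ℕ) (X : Fin r → Finset W),
    IsPathDecomp H X ∧ sSup (Set.range fun i => (X i).card) - 1 = k }.Nonempty :=
  ⟨_, 1, fun _ => Finset.univ, isPathDecomp_trivial H, rfl⟩

end Trivial

section Pull
variable {V W : Type} [Fintype W] [Nonempty W] [Nonempty V] {G : SimpleGraph V} {H : SimpleGraph W}
  {f : V → W} (hf : Function.Injective f)
  (hadj : ∀ x y, G.Adj x y → H.Adj (f x) (f y))

lemma bdd_range_card {ι : Type} (X : ι → Finset W) :
    BddAbove (Set.range fun u => (X u).card) :=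
  ⟨Fintype.card W, by rintro _ ⟨u, rfl⟩; exact Finset.card_le_univ _⟩

include hf hadj in
lemma treewidth_le_of_inj : treewidth G ≤ treewidth H := by
  classical
  refine le_csInf (treeSet_nonempty H) ?_
  rintro k ⟨ι, T, X, ⟨hT, hcov, hedge, hconn⟩, rfl⟩
  have hY : IsTreeDecomp G T (fun u => (X u).preimage f hf.injOn) := by
    refine ⟨hT, fun x => ?_, fun x y hxy => ?_, fun x => ?_⟩
    · obtain ⟨u, hu⟩ := hcov (f x)
      exact ⟨u, by simpa using hu⟩
    · obtain ⟨u, hu1, hu2⟩ := hedge _ _ (hadj x y hxy)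
      exact ⟨u, by simpa using hu1, by simpa using hu2⟩
    · have : {u : ι | x ∈ (X u).preimage f hf.injOn} = {u : ι | f x ∈ X u} := by
        ext u; simp
      rw [this]
      exact hconn (f x)
  refine le_trans (Nat.sInf_le ⟨ι, T, _, hY, rfl⟩) ?_
  have hne : Nonempty ι := hT.isConnected.nonempty
  refine Nat.sub_le_sub_right (csSup_le (Set.range_nonempty _) ?_) 1
  rintro _ ⟨u, rfl⟩
  refine le_trans ?_ (le_csSup (bdd_range_card X) ⟨u, rfl⟩)
  exact Finset.card_le_card_of_injOn f (fun x hx => by simpa using hx) hf.injOn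

include hf hadj in
lemma pathwidth_le_of_inj : pathwidth G ≤ pathwidth H := by
  classical
  refine le_csInf (pathSet_nonempty H) ?_
  rintro k ⟨r, X, ⟨hcov, hedge, hord⟩, rfl⟩
  have hY : IsPathDecomp G (fun i => (X i).preimage f hf.injOn) := by
    refine ⟨fun x => ?_, fun x y hxy => ?_, fun i j l hij hjl x hx hx' => ?_⟩
    · obtain ⟨i, hi⟩ := hcov (f x)
      exact ⟨i, by simpa using hi⟩
    · obtain ⟨i, h1, h2⟩ := hedge _ _ (hadj x y hxy)
      exact ⟨i, by simpa using h1, by simpa using h2⟩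
    · simp only [Finset.mem_preimage] at *
      exact hord i j l hij hjl _ hx hx'
  refine le_trans (Nat.sInf_le ⟨r, _, hY, rfl⟩) ?_
  have hne : Nonempty (Fin r) := by
    obtain ⟨i, _⟩ := hY.1 (Classical.arbitrary V)
    exact ⟨i⟩
  refine Nat.sub_le_sub_right (csSup_le (Set.range_nonempty _) ?_) 1
  rintro _ ⟨u, rfl⟩
  refine le_trans ?_ (le_csSup (bdd_range_card X) ⟨u, rfl⟩)
  exact Finset.card_le_card_of_injOn f (fun x hx => by simpa using hx) hf.injOn

end Pull
section Emb
variable {V₁ V₂ : Type} (G₁ : SimpleGraph V₁) (G₂ : SimpleGraph V₂) (v : V₁) (w : V₂)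

open Classical in
noncomputable def f1 (x : V₁) : Option ({x : V₁ // x ≠ v} ⊕ {y : V₂ // y ≠ w}) :=
  if h : x = v then none else some (.inl ⟨x, h⟩)

open Classical in
noncomputable def f2 (y : V₂) : Option ({x : V₁ // x ≠ v} ⊕ {y : V₂ // y ≠ w}) :=
  if h : y = w then none else some (.inr ⟨y, h⟩)

variable {G₁ G₂ v w}

lemma f1_inj : Function.Injective (f1 (V₂ := V₂) v w) := by
  intro a b h
  unfold f1 at h
  split_ifs at h with ha hb hb <;> simp_all

lemma f2_inj : Function.Injective (f2 (V₁ := V₁) v w) := by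
  intro a b h
  unfold f2 at h
  split_ifs at h with ha hb hb <;> simp_all

lemma f1_adj {x y : V₁} (h : G₁.Adj x y) :
    (oneSum G₁ G₂ v w).Adj (f1 v w x) (f1 v w y) := by
  unfold f1
  split_ifs with hx hy hy
  · exact absurd (hx.trans hy.symm) h.ne
  · subst hx; exact h.symm
  · subst hy; exact h
  · exact h

lemma f2_adj {x y : V₂} (h : G₂.Adj x y) :
    (oneSum G₁ G₂ v w).Adj (f2 v w x) (f2 v w y) := by
  unfold f2
  split_ifs with hx hy hy
  · exact absurd (hx.trans hy.symm) h.ne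
  · subst hx; exact h.symm
  · subst hy; exact h
  · exact h

variable [DecidableEq (Option ({x : V₁ // x ≠ v} ⊕ {y : V₂ // y ≠ w}))]

lemma f1_image_none {s : Finset V₁} :
    none ∈ s.image (f1 (V₂ := V₂) v w) ↔ v ∈ s := by
  constructor
  · rintro hm
    rw [Finset.mem_image] at hm
    obtain ⟨x, hx, he⟩ := hm
    unfold f1 at he
    split_ifs at he with h
    subst h; exact hx
  · intro hv
    rw [Finset.mem_image]
    exact ⟨v, hv, by simp [f1]⟩

lemma f2_image_none {s : Finset V₂} :
    none ∈ s.image (f2 (V₁ := V₁) v w) ↔ w ∈ s := by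
  constructor
  · rintro hm
    rw [Finset.mem_image] at hm
    obtain ⟨x, hx, he⟩ := hm
    unfold f2 at he
    split_ifs at he with h
    subst h; exact hx
  · intro hw
    rw [Finset.mem_image]
    exact ⟨w, hw, by simp [f2]⟩

lemma f1_image_inl {s : Finset V₁} {a : {x : V₁ // x ≠ v}} :
    some (Sum.inl a) ∈ s.image (f1 (V₂ := V₂) v w) ↔ a.1 ∈ s := by
  constructor
  · rintro hm
    rw [Finset.mem_image] at hm
    obtain ⟨x, hx, he⟩ := hm
    unfold f1 at he
    obtain ⟨a, hne⟩ := a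
    split_ifs at he with h
    have hxa : x = a := by simpa using he
    subst hxa; exact hx
  · intro ha
    rw [Finset.mem_image]
    exact ⟨a.1, ha, by simp [f1, a.2]⟩

lemma f2_image_inr {s : Finset V₂} {a : {y : V₂ // y ≠ w}} :
    some (Sum.inr a) ∈ s.image (f2 (V₁ := V₁) v w) ↔ a.1 ∈ s := by
  constructor
  · rintro hm
    rw [Finset.mem_image] at hm
    obtain ⟨x, hx, he⟩ := hm
    unfold f2 at he
    obtain ⟨a, hne⟩ := a
    split_ifs at he with h
    have hxa : x = a := by simpa using he
    subst hxa; exact hx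
  · intro ha
    rw [Finset.mem_image]
    exact ⟨a.1, ha, by simp [f2, a.2]⟩

lemma f1_image_not_inr {s : Finset V₁} {b : {y : V₂ // y ≠ w}} :
    some (Sum.inr b) ∉ s.image (f1 (V₂ := V₂) v w) := by
  rintro hm
  rw [Finset.mem_image] at hm
  obtain ⟨x, _, he⟩ := hm
  unfold f1 at he
  split_ifs at he <;> simp at he

lemma f2_image_not_inl {s : Finset V₂} {b : {x : V₁ // x ≠ v}} :
    some (Sum.inl b) ∉ s.image (f2 (V₁ := V₁) v w) := by
  rintro hm
  rw [Finset.mem_image] at hm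
  obtain ⟨x, _, he⟩ := hm
  unfold f2 at he
  split_ifs at he <;> simp at he

end Emb
section GlueInd
variable {ι₁ ι₂ : Type} {T₁ : SimpleGraph ι₁} {T₂ : SimpleGraph ι₂} {u₀ : ι₁} {u₁ : ι₂}

def glueIndHomL (S₁ : Set ι₁) (S : Set (ι₁ ⊕ ι₂)) (hs : ∀ c ∈ S₁, Sum.inl c ∈ S) :
    T₁.induce S₁ →g (glue T₁ T₂ u₀ u₁).induce S where
  toFun := fun c => ⟨.inl c.1, hs c.1 c.2⟩
  map_rel' := fun {a b} h => h

def glueIndHomR (S₂ : Set ι₂) (S : Set (ι₁ ⊕ ι₂)) (hs : ∀ c ∈ S₂, Sum.inr c ∈ S) :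
    T₂.induce S₂ →g (glue T₁ T₂ u₀ u₁).induce S where
  toFun := fun c => ⟨.inr c.1, hs c.1 c.2⟩
  map_rel' := fun {a b} h => h

end GlueInd

lemma arith_tw {t s1 s2 s3 : ℕ} (h1 : t ≤ s3 - 1) (h2 : s3 ≤ max s1 s2) :
    t ≤ max (s1 - 1) (s2 - 1) := by omega

lemma arith_pw {p s1 s2 s3 : ℕ} (h1 : p ≤ s3 - 1) (h2 : s3 ≤ max s1 s2 + 1)
    (h3 : 1 ≤ s1) (h4 : 1 ≤ s2) : p ≤ max (s1 - 1) (s2 - 1) + 1 := by omega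

lemma treewidth_oneSum_le {V₁ V₂ : Type} [Fintype V₁] [Fintype V₂]
    (G₁ : SimpleGraph V₁) (G₂ : SimpleGraph V₂) (v : V₁) (w : V₂) :
    treewidth (oneSum G₁ G₂ v w) ≤ max (treewidth G₁) (treewidth G₂) := by
  classical
  haveI : Nonempty V₁ := ⟨v⟩
  haveI : Nonempty V₂ := ⟨w⟩
  obtain ⟨ι₁, T₁, X₁, hd₁, hw₁⟩ := Nat.sInf_mem (treeSet_nonempty G₁)
  obtain ⟨ι₂, T₂, X₂, hd₂, hw₂⟩ := Nat.sInf_mem (treeSet_nonempty G₂)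
  obtain ⟨hT₁, hcov₁, hedge₁, hconn₁⟩ := hd₁
  obtain ⟨hT₂, hcov₂, hedge₂, hconn₂⟩ := hd₂
  obtain ⟨u₀, hu₀⟩ := hcov₁ v
  obtain ⟨u₁, hu₁⟩ := hcov₂ w
  set Y : ι₁ ⊕ ι₂ → Finset (Option ({x : V₁ // x ≠ v} ⊕ {y : V₂ // y ≠ w})) :=
    Sum.elim (fun a => (X₁ a).image (f1 v w)) (fun b => (X₂ b).image (f2 v w)) with hYdef
  have hdec : IsTreeDecomp (oneSum G₁ G₂ v w) (glue T₁ T₂ u₀ u₁) Y := by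
    refine ⟨glue_isTree hT₁ hT₂, ?_, ?_, ?_⟩
    · rintro (_ | a | a)
      · exact ⟨.inl u₀, f1_image_none.mpr hu₀⟩
      · obtain ⟨u, hu⟩ := hcov₁ a.1
        exact ⟨.inl u, f1_image_inl.mpr hu⟩
      · obtain ⟨u, hu⟩ := hcov₂ a.1
        exact ⟨.inr u, f2_image_inr.mpr hu⟩
    · rintro (_ | a | a) (_ | b | b) h
      · exact h.elim
      · obtain ⟨u, h1, h2⟩ := hedge₁ _ _ h
        exact ⟨.inl u, f1_image_none.mpr h2, f1_image_inl.mpr h1⟩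
      · obtain ⟨u, h1, h2⟩ := hedge₂ _ _ h
        exact ⟨.inr u, f2_image_none.mpr h2, f2_image_inr.mpr h1⟩
      · obtain ⟨u, h1, h2⟩ := hedge₁ _ _ h
        exact ⟨.inl u, f1_image_inl.mpr h1, f1_image_none.mpr h2⟩
      · obtain ⟨u, h1, h2⟩ := hedge₁ _ _ h
        exact ⟨.inl u, f1_image_inl.mpr h1, f1_image_inl.mpr h2⟩
      · exact h.elim
      · obtain ⟨u, h1, h2⟩ := hedge₂ _ _ h
        exact ⟨.inr u, f2_image_inr.mpr h1, f2_image_none.mpr h2⟩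
      · exact h.elim
      · obtain ⟨u, h1, h2⟩ := hedge₂ _ _ h
        exact ⟨.inr u, f2_image_inr.mpr h1, f2_image_inr.mpr h2⟩
    · rintro (_ | a | a)
      · rw [connected_iff]
        refine ⟨?_, ⟨⟨.inl u₀, f1_image_none.mpr hu₀⟩⟩⟩
        have hreach : ∀ x : {u : ι₁ ⊕ ι₂ | (none : Option _) ∈ Y u},
            ((glue T₁ T₂ u₀ u₁).induce {u | (none : Option _) ∈ Y u}).Reachable x
              ⟨.inl u₀, f1_image_none.mpr hu₀⟩ := by
          rintro ⟨(c | c), hc⟩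
          · have hc' : v ∈ X₁ c := f1_image_none.mp hc
            exact Reachable.map
              (glueIndHomL {u | v ∈ X₁ u} _ (fun e he => f1_image_none.mpr he))
              ((hconn₁ v).preconnected ⟨c, hc'⟩ ⟨u₀, hu₀⟩)
          · have hc' : w ∈ X₂ c := f2_image_none.mp hc
            have r1 := Reachable.map
              (glueIndHomR (T₁ := T₁) (u₀ := u₀) (u₁ := u₁) {u | w ∈ X₂ u} {u : ι₁ ⊕ ι₂ | (none : Option _) ∈ Y u}
                (fun e he => f2_image_none.mpr he))
              ((hconn₂ w).preconnected ⟨c, hc'⟩ ⟨u₁, hu₁⟩)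
            refine r1.trans (Adj.reachable ?_)
            exact (⟨rfl, rfl⟩ : (glue T₁ T₂ u₀ u₁).Adj (.inr u₁) (.inl u₀))
        exact fun x y => (hreach x).trans (hreach y).symm
      · rw [connected_iff]
        obtain ⟨u, hu⟩ := hcov₁ a.1
        refine ⟨?_, ⟨⟨.inl u, f1_image_inl.mpr hu⟩⟩⟩
        rintro ⟨(c | c), hc⟩ ⟨(d | d), hd⟩
        · exact Reachable.map
            (glueIndHomL {u | a.1 ∈ X₁ u} _ (fun e he => f1_image_inl.mpr he))
            ((hconn₁ a.1).preconnected ⟨c, f1_image_inl.mp hc⟩ ⟨d, f1_image_inl.mp hd⟩)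
        · exact absurd hd f2_image_not_inl
        · exact absurd hc f2_image_not_inl
        · exact absurd hc f2_image_not_inl
      · rw [connected_iff]
        obtain ⟨u, hu⟩ := hcov₂ a.1
        refine ⟨?_, ⟨⟨.inr u, f2_image_inr.mpr hu⟩⟩⟩
        rintro ⟨(c | c), hc⟩ ⟨(d | d), hd⟩
        · exact absurd hc f1_image_not_inr
        · exact absurd hc f1_image_not_inr
        · exact absurd hd f1_image_not_inr
        · exact Reachable.map
            (glueIndHomR {u | a.1 ∈ X₂ u} _ (fun e he => f2_image_inr.mpr he))
            ((hconn₂ a.1).preconnected ⟨c, f2_image_inr.mp hc⟩ ⟨d, f2_image_inr.mp hd⟩)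
  have h1 : treewidth (oneSum G₁ G₂ v w) ≤ sSup (Set.range fun u => (Y u).card) - 1 :=
    Nat.sInf_le ⟨ι₁ ⊕ ι₂, glue T₁ T₂ u₀ u₁, Y, hdec, rfl⟩
  haveI : Nonempty ι₁ := hT₁.isConnected.nonempty
  have h2 : sSup (Set.range fun u => (Y u).card) ≤
      max (sSup (Set.range fun u => (X₁ u).card)) (sSup (Set.range fun u => (X₂ u).card)) := by
    refine csSup_le (Set.range_nonempty _) ?_
    rintro _ ⟨(a | a), rfl⟩
    · exact le_trans Finset.card_image_le
        (le_trans (le_csSup (bdd_range_card X₁) ⟨a, rfl⟩) (le_max_left _ _))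
    · exact le_trans Finset.card_image_le
        (le_trans (le_csSup (bdd_range_card X₂) ⟨a, rfl⟩) (le_max_right _ _))
  have hw₁' : sSup (Set.range fun u => (X₁ u).card) - 1 = treewidth G₁ := hw₁
  have hw₂' : sSup (Set.range fun u => (X₂ u).card) - 1 = treewidth G₂ := hw₂
  rw [← hw₁', ← hw₂']
  exact arith_tw h1 h2
lemma pathwidth_oneSum_le {V₁ V₂ : Type} [Fintype V₁] [Fintype V₂]
    (G₁ : SimpleGraph V₁) (G₂ : SimpleGraph V₂) (v : V₁) (w : V₂) :
    pathwidth (oneSum G₁ G₂ v w) ≤ max (pathwidth G₁) (pathwidth G₂) + 1 := by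
  classical
  haveI : Nonempty V₁ := ⟨v⟩
  haveI : Nonempty V₂ := ⟨w⟩
  obtain ⟨r₁, X₁, hd₁, hw₁⟩ := Nat.sInf_mem (pathSet_nonempty G₁)
  obtain ⟨r₂, X₂, hd₂, hw₂⟩ := Nat.sInf_mem (pathSet_nonempty G₂)
  have hw₁' : sSup (Set.range fun i => (X₁ i).card) - 1 = pathwidth G₁ := hw₁
  have hw₂' : sSup (Set.range fun i => (X₂ i).card) - 1 = pathwidth G₂ := hw₂
  clear hw₁ hw₂
  obtain ⟨hcov₁, hedge₁, hord₁⟩ := hd₁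
  obtain ⟨hcov₂, hedge₂, hord₂⟩ := hd₂
  obtain ⟨i₀, hi₀⟩ := hcov₁ v
  obtain ⟨j₀, hj₀⟩ := hcov₂ w
  have hr₁ : 0 < r₁ := i₀.pos
  have hr₂ : 0 < r₂ := j₀.pos
  set Z : Fin (r₁ + r₂) → Finset (Option ({x : V₁ // x ≠ v} ⊕ {y : V₂ // y ≠ w})) :=
    fun i => (if h : (i : ℕ) < r₁ then (X₁ ⟨i, h⟩).image (f1 v w)
      else (X₂ ⟨(i : ℕ) - r₁, (tsub_lt_iff_left (le_of_not_gt h)).mpr i.isLt⟩).image (f2 v w)) ∪ {none} with hZdef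
  have hZn : ∀ i, (none : Option ({x : V₁ // x ≠ v} ⊕ {y : V₂ // y ≠ w})) ∈ Z i := by
    intro i
    simp only [hZdef]
    exact Finset.mem_union_right _ (Finset.mem_singleton_self _)
  have hZl : ∀ (i : Fin (r₁ + r₂)) (j : Fin r₁), (i : ℕ) = (j : ℕ) →
      ∀ a, (some (Sum.inl a) ∈ Z i ↔ a.1 ∈ X₁ j) := by
    intro i j hij a
    have h : (i : ℕ) < r₁ := hij ▸ j.isLt
    have hj : (⟨(i : ℕ), h⟩ : Fin r₁) = j := Fin.ext hij
    simp only [hZdef, dif_pos h, Finset.mem_union, Finset.mem_singleton, hj]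
    constructor
    · rintro (hm | hm)
      · exact f1_image_inl.mp hm
      · simp at hm
    · intro hm
      exact Or.inl (f1_image_inl.mpr hm)
  have hZl' : ∀ (i : Fin (r₁ + r₂)), ¬ (i : ℕ) < r₁ → ∀ a, some (Sum.inl a) ∉ Z i := by
    intro i h a hm
    simp only [hZdef, dif_neg h, Finset.mem_union, Finset.mem_singleton] at hm
    rcases hm with hm | hm
    · exact f2_image_not_inl hm
    · simp at hm
  have hZr : ∀ (i : Fin (r₁ + r₂)) (j : Fin r₂), (i : ℕ) = r₁ + (j : ℕ) →
      ∀ a, (some (Sum.inr a) ∈ Z i ↔ a.1 ∈ X₂ j) := by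
    intro i j hij a
    have h : ¬ (i : ℕ) < r₁ := by omega
    have hj : (⟨(i : ℕ) - r₁, by have := i.isLt; omega⟩ : Fin r₂) = j := Fin.ext (by simp; omega)
    simp only [hZdef, dif_neg h, Finset.mem_union, Finset.mem_singleton, hj]
    constructor
    · rintro (hm | hm)
      · exact f2_image_inr.mp hm
      · simp at hm
    · intro hm
      exact Or.inl (f2_image_inr.mpr hm)
  have hZr' : ∀ (i : Fin (r₁ + r₂)), (i : ℕ) < r₁ → ∀ a, some (Sum.inr a) ∉ Z i := by
    intro i h a hm
    simp only [hZdef, dif_pos h, Finset.mem_union, Finset.mem_singleton] at hm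
    rcases hm with hm | hm
    · exact f1_image_not_inr hm
    · simp at hm
  have hdec : IsPathDecomp (oneSum G₁ G₂ v w) Z := by
    refine ⟨?_, ?_, ?_⟩
    · rintro (_ | a | a)
      · exact ⟨⟨0, by omega⟩, hZn _⟩
      · obtain ⟨i, hi⟩ := hcov₁ a.1
        exact ⟨⟨(i : ℕ), by have := i.isLt; omega⟩, (hZl _ i rfl a).mpr hi⟩
      · obtain ⟨j, hj⟩ := hcov₂ a.1
        exact ⟨⟨r₁ + (j : ℕ), by have := j.isLt; omega⟩, (hZr _ j rfl a).mpr hj⟩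
    · rintro (_ | a | a) (_ | b | b) h
      · exact h.elim
      · obtain ⟨i, hi⟩ := hcov₁ b.1
        exact ⟨⟨(i : ℕ), by have := i.isLt; omega⟩, hZn _, (hZl _ i rfl b).mpr hi⟩
      · obtain ⟨j, hj⟩ := hcov₂ b.1
        exact ⟨⟨r₁ + (j : ℕ), by have := j.isLt; omega⟩, hZn _, (hZr _ j rfl b).mpr hj⟩
      · obtain ⟨i, hi⟩ := hcov₁ a.1
        exact ⟨⟨(i : ℕ), by have := i.isLt; omega⟩, (hZl _ i rfl a).mpr hi, hZn _⟩
      · obtain ⟨i, h1, h2⟩ := hedge₁ _ _ h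
        exact ⟨⟨(i : ℕ), by have := i.isLt; omega⟩, (hZl _ i rfl a).mpr h1,
          (hZl _ i rfl b).mpr h2⟩
      · exact h.elim
      · obtain ⟨j, hj⟩ := hcov₂ a.1
        exact ⟨⟨r₁ + (j : ℕ), by have := j.isLt; omega⟩, (hZr _ j rfl a).mpr hj, hZn _⟩
      · exact h.elim
      · obtain ⟨j, h1, h2⟩ := hedge₂ _ _ h
        exact ⟨⟨r₁ + (j : ℕ), by have := j.isLt; omega⟩, (hZr _ j rfl a).mpr h1,
          (hZr _ j rfl b).mpr h2⟩
    · rintro i j l hij hjl (_ | a | a) hxi hxl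
      · exact hZn j
      · rw [Fin.lt_def] at hij hjl
        by_cases hi : (i : ℕ) < r₁
        · by_cases hl : (l : ℕ) < r₁
          · have hj' : (j : ℕ) < r₁ := by omega
            have h1 := (hZl i ⟨i, hi⟩ rfl a).mp hxi
            have h2 := (hZl l ⟨l, hl⟩ rfl a).mp hxl
            exact (hZl j ⟨j, hj'⟩ rfl a).mpr
              (hord₁ ⟨i, hi⟩ ⟨j, hj'⟩ ⟨l, hl⟩ (Fin.mk_lt_mk.mpr hij) (Fin.mk_lt_mk.mpr hjl)
                a.1 h1 h2)
          · exact absurd hxl (hZl' l hl a)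
        · exact absurd hxi (hZl' i hi a)
      · rw [Fin.lt_def] at hij hjl
        by_cases hi : (i : ℕ) < r₁
        · exact absurd hxi (hZr' i hi a)
        · have h1 := (hZr i ⟨(i : ℕ) - r₁, by have := i.isLt; omega⟩
            (show (i : ℕ) = r₁ + ((i : ℕ) - r₁) by omega) a).mp hxi
          have h2 := (hZr l ⟨(l : ℕ) - r₁, by have := l.isLt; omega⟩
            (show (l : ℕ) = r₁ + ((l : ℕ) - r₁) by omega) a).mp hxl
          refine (hZr j ⟨(j : ℕ) - r₁, by have := j.isLt; omega⟩
            (show (j : ℕ) = r₁ + ((j : ℕ) - r₁) by omega) a).mpr ?_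
          exact hord₂ _ _ _ (Fin.mk_lt_mk.mpr (by omega)) (Fin.mk_lt_mk.mpr (by omega))
            a.1 h1 h2
  have hcard : ∀ i, (Z i).card ≤
      max (sSup (Set.range fun i => (X₁ i).card)) (sSup (Set.range fun i => (X₂ i).card)) + 1 := by
    intro i
    by_cases h : (i : ℕ) < r₁
    · have h1 : Z i = (X₁ ⟨i, h⟩).image (f1 v w) ∪ {none} := by
        simp only [hZdef, dif_pos h]
      rw [h1]
      refine le_trans (Finset.card_union_le _ _) ?_
      simp only [Finset.card_singleton]
      exact Nat.add_le_add_right (le_trans Finset.card_image_le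
        (le_trans (le_csSup (bdd_range_card X₁) ⟨_, rfl⟩) (le_max_left _ _))) 1
    · have h1 : Z i = (X₂ ⟨(i : ℕ) - r₁, by have := i.isLt; omega⟩).image (f2 v w) ∪ {none} := by
        simp only [hZdef, dif_neg h]
      rw [h1]
      refine le_trans (Finset.card_union_le _ _) ?_
      simp only [Finset.card_singleton]
      exact Nat.add_le_add_right (le_trans Finset.card_image_le
        (le_trans (le_csSup (bdd_range_card X₂) ⟨_, rfl⟩) (le_max_right _ _))) 1
  haveI : Nonempty (Fin (r₁ + r₂)) := ⟨⟨0, by omega⟩⟩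
  have h1 : pathwidth (oneSum G₁ G₂ v w) ≤ sSup (Set.range fun i => (Z i).card) - 1 :=
    Nat.sInf_le ⟨r₁ + r₂, Z, hdec, rfl⟩
  have h2 : sSup (Set.range fun i => (Z i).card) ≤
      max (sSup (Set.range fun i => (X₁ i).card)) (sSup (Set.range fun i => (X₂ i).card)) + 1 := by
    refine csSup_le (Set.range_nonempty _) ?_
    rintro _ ⟨i, rfl⟩
    exact hcard i
  have h3 : 1 ≤ sSup (Set.range fun i => (X₁ i).card) :=
    le_trans (Finset.card_pos.mpr ⟨v, hi₀⟩) (le_csSup (bdd_range_card X₁) ⟨i₀, rfl⟩)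
  have h4 : 1 ≤ sSup (Set.range fun i => (X₂ i).card) :=
    le_trans (Finset.card_pos.mpr ⟨w, hj₀⟩) (le_csSup (bdd_range_card X₂) ⟨j₀, rfl⟩)
  rw [← hw₁', ← hw₂']
  exact arith_pw h1 h2 h3 h4
/-- For vertex-disjoint finite simple graphs `G₁`, `G₂` and vertices `v ∈ V(G₁)`,
`w ∈ V(G₂)`: `tw(G₁ ⊕_{v,w} G₂) = max(tw(G₁), tw(G₂))` and
`max(pw(G₁), pw(G₂)) ≤ pw(G₁ ⊕_{v,w} G₂) ≤ max(pw(G₁), pw(G₂)) + 1`. -/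
theorem treewidth_pathwidth_oneSum
    {V₁ V₂ : Type} [Fintype V₁] [Fintype V₂]
    (G₁ : SimpleGraph V₁) (G₂ : SimpleGraph V₂) (v : V₁) (w : V₂) :
    treewidth (oneSum G₁ G₂ v w) = max (treewidth G₁) (treewidth G₂) ∧
    (max (pathwidth G₁) (pathwidth G₂) ≤ pathwidth (oneSum G₁ G₂ v w) ∧
      pathwidth (oneSum G₁ G₂ v w) ≤ max (pathwidth G₁) (pathwidth G₂) + 1) := by
  classical
  haveI : Nonempty V₁ := ⟨v⟩
  haveI : Nonempty V₂ := ⟨w⟩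
  haveI : Fintype (Option ({x : V₁ // x ≠ v} ⊕ {y : V₂ // y ≠ w})) := Fintype.ofFinite _
  haveI : Nonempty (Option ({x : V₁ // x ≠ v} ⊕ {y : V₂ // y ≠ w})) := ⟨none⟩
  have l1 : treewidth G₁ ≤ treewidth (oneSum G₁ G₂ v w) :=
    treewidth_le_of_inj f1_inj (fun x y h => f1_adj h)
  have l2 : treewidth G₂ ≤ treewidth (oneSum G₁ G₂ v w) :=
    treewidth_le_of_inj f2_inj (fun x y h => f2_adj h)
  have p1 : pathwidth G₁ ≤ pathwidth (oneSum G₁ G₂ v w) :=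
    pathwidth_le_of_inj f1_inj (fun x y h => f1_adj h)
  have p2 : pathwidth G₂ ≤ pathwidth (oneSum G₁ G₂ v w) :=
    pathwidth_le_of_inj f2_inj (fun x y h => f2_adj h)
  exact ⟨le_antisymm (treewidth_oneSum_le G₁ G₂ v w) (max_le l1 l2),
    max_le p1 p2, pathwidth_oneSum_le G₁ G₂ v w⟩
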